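/- Let $u$ be a measurable function near $0$ in $\mathbb{C}^{n-1}$, $0 < t \leq 1$, and define $\psi_t(z', z_n) = \max(u(z'), t \log|z_n|)$ on a polydisc. Then for the log canonical threshold at $0$ one has $c(\psi_t) = c(u) + \frac{1}{t}$, where $c$ denotes the log canonical threshold at the origin of the respective space. -/

import Mathlib

open MeasureTheory Set Metric
open scoped ENNReal

/-- The log canonical threshold at a point `x₀` of a function `φ` with respect to a
measure `μ`: `c(φ) = sup {c > 0 : e^{-2cφ} ∈ L¹(μ) near x₀}`. -/
noncomputable def lctAt {X : Type*} [MeasurableSpace X] [TopologicalSpace X]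
    (μ : Measure X) (x₀ : X) (φ : X → ℝ) : ℝ≥0∞ :=
  sSup {e : ℝ≥0∞ | ∃ c : ℝ, e = ENNReal.ofReal c ∧ 0 < c ∧
    ∃ V : Set X, IsOpen V ∧ x₀ ∈ V ∧
      IntegrableOn (fun z => Real.exp (-2 * c * φ z)) V μ}

section Aux

lemma L1 {r : ℝ} (hr : -1 < r) :
    IntegrableOn (fun x : ℝ => |x| ^ r) (Set.Ioo (-1 : ℝ) 1) volume := by
  have hpos : IntegrableOn (fun x : ℝ => |x| ^ r) (Set.Ioc (0 : ℝ) 1) volume := by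
    have h := (intervalIntegral.intervalIntegrable_rpow' (a := 0) (b := 1) hr)
    rw [intervalIntegrable_iff_integrableOn_Ioc_of_le (by norm_num)] at h
    refine h.congr_fun (fun x hx => ?_) measurableSet_Ioc
    rw [abs_of_pos hx.1]
  have hpos' : IntegrableOn (fun x : ℝ => |x| ^ r) (Set.Ico (0 : ℝ) 1) volume := by
    rwa [integrableOn_Ico_iff_integrableOn_Ioo, ← integrableOn_Ioc_iff_integrableOn_Ioo] at *
  have hneg : IntegrableOn (fun x : ℝ => |x| ^ r) (Set.Ioc (-1 : ℝ) 0) volume := by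
    rw [← (Measure.measurePreserving_neg (volume : Measure ℝ)).integrableOn_comp_preimage
        (Homeomorph.neg ℝ).measurableEmbedding] at hpos'
    · simpa [Function.comp_def, abs_neg, Set.neg_Ioc, show -(0:ℝ) = 0 by norm_num] using hpos'
  have : Set.Ioo (-1 : ℝ) 1 ⊆ Set.Ioc (-1 : ℝ) 0 ∪ Set.Ioc (0 : ℝ) 1 := by
    intro x hx
    rcases le_or_gt x 0 with h | h
    · exact Or.inl ⟨hx.1, h⟩
    · exact Or.inr ⟨h, hx.2.le⟩
  exact (hneg.union hpos).mono_set this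

lemma measurable_rpow_const_comp {α : Type*} [MeasurableSpace α] {f : α → ℝ}
    (hf : Measurable f) (h0 : ∀ x, 0 ≤ f x) (q : ℝ) : Measurable fun x => f x ^ q := by
  have h : (fun x => f x ^ q)
      = fun x => if f x = 0 then (if q = 0 then 1 else 0) else Real.exp (Real.log (f x) * q) := by
    funext x
    split_ifs with h1 h2
    · rw [h1, h2, Real.rpow_zero]
    · rw [h1, Real.zero_rpow h2]
    · rw [Real.rpow_def_of_pos (lt_of_le_of_ne (h0 x) (Ne.symm h1))]
  rw [h]
  exact Measurable.ite (hf (measurableSet_singleton 0)) measurable_const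
    ((Real.measurable_log.comp hf).mul_const q).exp

lemma null_re : (volume {z : ℂ | z.re = 0}) = 0 := by
  have h : {z : ℂ | z.re = 0} = Complex.measurableEquivRealProd ⁻¹' ({0} ×ˢ Set.univ) := by
    ext z
    simp [Complex.measurableEquivRealProd, Set.mem_prod, eq_comm]
  rw [h, Complex.volume_preserving_equiv_real_prod.measure_preimage
      ((MeasurableSet.singleton 0).prod MeasurableSet.univ).nullMeasurableSet]
  rw [Measure.volume_eq_prod, Measure.prod_prod]
  simp

lemma null_im : (volume {z : ℂ | z.im = 0}) = 0 := by
  have h : {z : ℂ | z.im = 0} = Complex.measurableEquivRealProd ⁻¹' (Set.univ ×ˢ {0}) := by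
    ext z
    simp [Complex.measurableEquivRealProd, Set.mem_prod, eq_comm]
  rw [h, Complex.volume_preserving_equiv_real_prod.measure_preimage
      (MeasurableSet.univ.prod (MeasurableSet.singleton 0)).nullMeasurableSet]
  rw [Measure.volume_eq_prod, Measure.prod_prod]
  simp

lemma L2 {p : ℝ} (hp0 : 0 < p) (hp : p < 2) :
    IntegrableOn (fun z : ℂ => ‖z‖ ^ (-p)) (ball (0 : ℂ) 1) volume := by
  set q : ℝ := -(p / 2) with hq
  have hq1 : -1 < q := by rw [hq]; linarith
  have hG : IntegrableOn (fun x : ℝ × ℝ => |x.1| ^ q * |x.2| ^ q)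
      (Set.Ioo (-1 : ℝ) 1 ×ˢ Set.Ioo (-1 : ℝ) 1) volume := by
    rw [Measure.volume_eq_prod, IntegrableOn, ← Measure.prod_restrict]
    exact (L1 hq1).mul_prod (L1 hq1)
  have hg : IntegrableOn (fun z : ℂ => |z.re| ^ q * |z.im| ^ q) (ball (0 : ℂ) 1) volume := by
    have h2 : IntegrableOn (fun z : ℂ => |z.re| ^ q * |z.im| ^ q)
        (Complex.measurableEquivRealProd ⁻¹' (Set.Ioo (-1 : ℝ) 1 ×ˢ Set.Ioo (-1 : ℝ) 1))
        volume := by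
      rw [show (fun z : ℂ => |z.re| ^ q * |z.im| ^ q)
          = (fun x : ℝ × ℝ => |x.1| ^ q * |x.2| ^ q) ∘ Complex.measurableEquivRealProd from rfl]
      exact (Complex.volume_preserving_equiv_real_prod.integrableOn_comp_preimage
        (MeasurableEquiv.measurableEmbedding _)).2 hG
    refine h2.mono_set fun z hz => ?_
    simp only [mem_ball, Complex.dist_eq, sub_zero] at hz
    constructor
    · constructor
      · exact neg_lt_of_abs_lt (lt_of_le_of_lt (Complex.abs_re_le_norm z) hz)
      · exact lt_of_abs_lt (lt_of_le_of_lt (Complex.abs_re_le_norm z) hz)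
    · constructor
      · exact neg_lt_of_abs_lt (lt_of_le_of_lt (Complex.abs_im_le_norm z) hz)
      · exact lt_of_abs_lt (lt_of_le_of_lt (Complex.abs_im_le_norm z) hz)
  have hmeas : AEStronglyMeasurable (fun z : ℂ => ‖z‖ ^ (-p))
      (volume.restrict (ball (0 : ℂ) 1)) :=
    (measurable_rpow_const_comp continuous_norm.measurable norm_nonneg
      (-p)).aestronglyMeasurable
  refine Integrable.mono' hg hmeas ?_
  have hnull : (volume.restrict (ball (0 : ℂ) 1)) ({z : ℂ | z.re = 0} ∪ {z : ℂ | z.im = 0}) = 0 := by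
    refine le_antisymm (le_trans (Measure.restrict_le_self _) ?_) (by simp)
    rw [show (0 : ℝ≥0∞) = 0 + 0 by simp]
    exact le_trans (measure_union_le _ _) (by rw [null_re, null_im])
  have hae : ∀ᵐ z ∂(volume.restrict (ball (0 : ℂ) 1)), z.re ≠ 0 ∧ z.im ≠ 0 := by
    rw [ae_iff]
    refine measure_mono_null (fun z hz => ?_) hnull
    simp only [not_and_or, not_not, Set.mem_setOf_eq] at hz ⊢
    tauto
  filter_upwards [hae] with z hz
  · obtain ⟨hre, him⟩ := hz
    have hre' : 0 < |z.re| := abs_pos.2 hre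
    have him' : 0 < |z.im| := abs_pos.2 him
    have habs : 0 < ‖z‖ := lt_of_lt_of_le hre' (Complex.abs_re_le_norm z)
    rw [Real.norm_eq_abs, abs_of_nonneg (Real.rpow_nonneg (norm_nonneg z) _)]
    have : ‖z‖ ^ (-p) = ‖z‖ ^ q * ‖z‖ ^ q := by
      rw [← Real.rpow_add habs]; ring_nf; rw [hq]; ring_nf
    rw [this]
    exact mul_le_mul (Real.rpow_le_rpow_of_nonpos hre' (Complex.abs_re_le_norm z) (by simp only [hq]; linarith))
      (Real.rpow_le_rpow_of_nonpos him' (Complex.abs_im_le_norm z) (by simp only [hq]; linarith))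
      (Real.rpow_nonneg (norm_nonneg z) _) (Real.rpow_nonneg (abs_nonneg _) _)

lemma helperP {m : ℕ} (φ : ((Fin m → ℂ) × ℂ) → ℝ) (hφm : Measurable φ)
    (hφ0 : ∀ z, 0 ≤ φ z) {f₁ : (Fin m → ℂ) → ℝ} {V' : Set (Fin m → ℂ)}
    (hf₁ : IntegrableOn f₁ V') {p : ℝ} (hp0 : 0 < p) (hp : p < 2)
    (hb : ∀ z : (Fin m → ℂ) × ℂ, z.2 ≠ 0 → φ z ≤ f₁ z.1 * ‖z.2‖ ^ (-p)) :
    IntegrableOn φ (V' ×ˢ ball (0 : ℂ) 1) volume := by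
  have hg : Integrable (fun z : (Fin m → ℂ) × ℂ => f₁ z.1 * ‖z.2‖ ^ (-p))
      ((volume.restrict V').prod (volume.restrict (ball (0 : ℂ) 1))) :=
    hf₁.mul_prod (L2 hp0 hp)
  rw [IntegrableOn, Measure.volume_eq_prod, ← Measure.prod_restrict]
  have hnull : ((volume.restrict V').prod (volume.restrict (ball (0 : ℂ) 1)))
      {z : (Fin m → ℂ) × ℂ | z.2 = 0} = 0 := by
    have h0 : ((volume.restrict V').prod (volume.restrict (ball (0 : ℂ) 1)))
        ((univ : Set (Fin m → ℂ)) ×ˢ ({0} : Set ℂ)) = 0 := by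
      rw [Measure.prod_prod, Measure.restrict_apply (MeasurableSet.singleton 0)]
      simp [measure_mono_null (inter_subset_left) (measure_singleton (0:ℂ))]
    exact measure_mono_null (fun z hz => Set.mem_prod.2 ⟨Set.mem_univ _, hz⟩) h0
  have hae : ∀ᵐ z ∂((volume.restrict V').prod (volume.restrict (ball (0 : ℂ) 1))),
      z.2 ≠ (0 : ℂ) := by
    rw [ae_iff]
    refine measure_mono_null (fun z hz => ?_) hnull
    simpa using hz
  refine Integrable.mono' hg hφm.aestronglyMeasurable ?_
  filter_upwards [hae] with z hz
  rw [Real.norm_eq_abs, abs_of_nonneg (hφ0 z)]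
  exact hb z hz

variable {m : ℕ} {u : (Fin m → ℂ) → ℝ} {t : ℝ}

lemma psi_meas (hu : Measurable u) (c : ℝ) :
    Measurable (fun z : (Fin m → ℂ) × ℂ =>
      Real.exp (-2 * c * max (u z.1) (t * Real.log (‖z.2‖)))) := by
  have h1 : Measurable fun z : (Fin m → ℂ) × ℂ => u z.1 := hu.comp measurable_fst
  have h2 : Measurable fun z : (Fin m → ℂ) × ℂ => t * Real.log (‖z.2‖) :=
    (Real.measurable_log.comp (continuous_norm.measurable.comp measurable_snd)).const_mul t
  exact ((h1.max h2).const_mul (-2 * c)).exp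

lemma expA1 (hu : Measurable u) (ht : 0 < t) {c : ℝ} (hc : 0 < c) (hct : c * t < 1) :
    IntegrableOn (fun z : (Fin m → ℂ) × ℂ =>
        Real.exp (-2 * c * max (u z.1) (t * Real.log (‖z.2‖))))
      (ball (0 : Fin m → ℂ) 1 ×ˢ ball (0 : ℂ) 1) volume := by
  refine helperP _ (psi_meas hu c) (fun z => (Real.exp_pos _).le)
    (f₁ := fun _ => (1 : ℝ)) ?_ (p := 2 * (c * t)) (by positivity) (by linarith) ?_
  · exact integrableOn_const measure_ball_lt_top.ne
  · intro z hz
    have ha : 0 < ‖z.2‖ := norm_pos_iff.mpr hz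
    rw [one_mul, Real.rpow_def_of_pos ha]
    have h1 : -2 * c * max (u z.1) (t * Real.log (‖z.2‖))
        ≤ Real.log (‖z.2‖) * -(2 * (c * t)) := by
      have := le_max_right (u z.1) (t * Real.log (‖z.2‖))
      nlinarith [this]
    exact Real.exp_le_exp.2 h1

lemma expA2 (hu : Measurable u) (ht : 0 < t) {c c' : ℝ} (hc : 0 < c) (hc' : 0 < c')
    (hlt : c < c' + 1 / t) (hct : 1 ≤ c * t) {V' : Set (Fin m → ℂ)}
    (hV'int : IntegrableOn (fun z' => Real.exp (-2 * c' * u z')) V') :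
    IntegrableOn (fun z : (Fin m → ℂ) × ℂ =>
        Real.exp (-2 * c * max (u z.1) (t * Real.log (‖z.2‖))))
      ((V' ∩ ball (0 : Fin m → ℂ) 1) ×ˢ ball (0 : ℂ) 1) volume := by
  have hctpos : 0 < c * t := by linarith
  set s : ℝ := (max ((c - c') / c) 0 + 1 / (c * t)) / 2 with hs
  have hmaxlt : max ((c - c') / c) 0 < 1 / (c * t) := by
    rw [max_lt_iff]
    constructor
    · rw [div_lt_div_iff₀ hc hctpos]
      have h1t : t * (1 / t) = 1 := by field_simp
      nlinarith [mul_lt_mul_of_pos_left hlt ht, h1t]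
    · positivity
  have hs_pos : 0 < s := by
    have h0 : (0 : ℝ) ≤ max ((c - c') / c) 0 := le_max_right _ _
    have : 0 < 1 / (c * t) := by positivity
    rw [hs]; linarith
  have hs_lt : s < 1 / (c * t) := by
    rw [hs]
    have h0 : max ((c - c') / c) 0 < 1 / (c * t) := hmaxlt
    linarith
  have hs1 : s ≤ 1 := by
    have : 1 / (c * t) ≤ 1 := by
      rw [div_le_one hctpos]; linarith
    linarith
  have hcs : c * (1 - s) ≤ c' := by
    have h1 : (c - c') / c ≤ s := by
      have := le_max_left ((c - c') / c) 0
      rw [hs]; linarith [hmaxlt]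
    have h2 : c - c' ≤ c * s := by
      rw [div_le_iff₀ hc] at h1; nlinarith
    nlinarith
  have hp0 : 0 < 2 * (c * t) * s := by positivity
  have hp2 : 2 * (c * t) * s < 2 := by
    have := (lt_div_iff₀ hctpos).1 hs_lt
    nlinarith
  refine helperP _ (psi_meas hu c) (fun z => (Real.exp_pos _).le)
    (f₁ := fun z' => Real.exp (-2 * c' * u z') + 1) ?_ hp0 hp2 ?_
  · refine (hV'int.mono_set inter_subset_left).add ?_
    refine integrableOn_const (ne_of_lt ?_)
    exact lt_of_le_of_lt (measure_mono inter_subset_right) measure_ball_lt_top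
  · intro z hz
    have ha : 0 < ‖z.2‖ := norm_pos_iff.mpr hz
    set a := ‖z.2‖
    set A := Real.exp (-2 * c * u z.1) with hA
    set B := Real.exp (-2 * c * (t * Real.log a)) with hB
    have hApos : 0 < A := Real.exp_pos _
    have hBpos : 0 < B := Real.exp_pos _
    have hmin : Real.exp (-2 * c * max (u z.1) (t * Real.log a)) = min A B := by
      rcases le_total (u z.1) (t * Real.log a) with h | h
      · rw [max_eq_right h, min_eq_right]
        exact Real.exp_le_exp.2 (by nlinarith)
      · rw [max_eq_left h, min_eq_left]
        exact Real.exp_le_exp.2 (by nlinarith)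
    have hminpos : 0 < min A B := lt_min hApos hBpos
    have key2 : min A B ≤ A ^ (1 - s) * B ^ s := by
      have : min A B = (min A B) ^ (1 - s) * (min A B) ^ s := by
        rw [← Real.rpow_add hminpos]
        norm_num
      rw [this]
      exact mul_le_mul (Real.rpow_le_rpow hminpos.le (min_le_left _ _) (by linarith))
        (Real.rpow_le_rpow hminpos.le (min_le_right _ _) hs_pos.le)
        (Real.rpow_nonneg hminpos.le _) (Real.rpow_nonneg hApos.le _)
    have key3 : A ^ (1 - s) ≤ Real.exp (-2 * c' * u z.1) + 1 := by
      rw [hA, ← Real.exp_mul]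
      rcases le_or_gt 0 (u z.1) with h | h
      · calc Real.exp (-2 * c * u z.1 * (1 - s)) ≤ 1 := by
              rw [Real.exp_le_one_iff]; nlinarith
          _ ≤ _ := by nlinarith [Real.exp_pos (-2 * c' * u z.1)]
      · calc Real.exp (-2 * c * u z.1 * (1 - s)) ≤ Real.exp (-2 * c' * u z.1) :=
              Real.exp_le_exp.2 (by nlinarith)
          _ ≤ _ := by linarith
    have key4 : B ^ s = a ^ (-(2 * (c * t) * s)) := by
      rw [hB, ← Real.exp_mul, Real.rpow_def_of_pos ha]
      ring_nf
    calc Real.exp (-2 * c * max (u z.1) (t * Real.log a)) = min A B := hmin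
      _ ≤ A ^ (1 - s) * B ^ s := key2
      _ ≤ (Real.exp (-2 * c' * u z.1) + 1) * a ^ (-(2 * (c * t) * s)) := by
          rw [← key4]
          exact mul_le_mul_of_nonneg_right key3 (Real.rpow_nonneg hBpos.le _)

lemma expB (hu : Measurable u) (ht : 0 < t) {c' : ℝ} (hc' : 0 < c')
    {V : Set ((Fin m → ℂ) × ℂ)} (hV : IsOpen V) (h0V : (0 : (Fin m → ℂ) × ℂ) ∈ V)
    (hint : IntegrableOn (fun z : (Fin m → ℂ) × ℂ =>
      Real.exp (-2 * (c' + 1 / t) * max (u z.1) (t * Real.log (‖z.2‖)))) V) :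
    ∃ W : Set (Fin m → ℂ), IsOpen W ∧ 0 ∈ W ∧
      IntegrableOn (fun z' => Real.exp (-2 * c' * u z')) W := by
  classical
  set c : ℝ := c' + 1 / t with hcc
  set φ : (Fin m → ℂ) × ℂ → ℝ := fun z =>
    Real.exp (-2 * c * max (u z.1) (t * Real.log (‖z.2‖))) with hφ
  obtain ⟨ε, hε, hball⟩ := Metric.isOpen_iff.1 hV 0 h0V
  set r : ℝ := min ε 1 with hrdef
  have hr : 0 < r := lt_min hε one_pos
  set W := ball (0 : Fin m → ℂ) r with hW
  set D := ball (0 : ℂ) r with hD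
  have hsub : W ×ˢ D ⊆ V := by
    have hb : W ×ˢ D = ball ((0 : Fin m → ℂ), (0 : ℂ)) r := ball_prod_same _ _ _
    rw [hb]
    exact fun z hz => hball (ball_subset_ball (min_le_left _ _) hz)
  have hint' : Integrable φ ((volume.restrict W).prod (volume.restrict D)) := by
    have h := (hint.mono_set hsub : IntegrableOn φ (W ×ˢ D) volume)
    rwa [IntegrableOn, Measure.volume_eq_prod, ← Measure.prod_restrict] at h
  have hF : Integrable (fun z' => ∫ w, φ (z', w) ∂(volume.restrict D))
      (volume.restrict W) := hint'.integral_prod_left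
  have hsec : ∀ᵐ z' ∂(volume.restrict W),
      Integrable (fun w => φ (z', w)) (volume.restrict D) := hint'.prod_right_ae
  have hne0 : ∀ᵐ w : ℂ ∂volume, w ≠ 0 := by
    rw [ae_iff]
    simpa using measure_singleton (0 : ℂ)
  have key : ∀ z', Integrable (fun w => φ (z', w)) (volume.restrict D) →
      Real.exp (-2 * c' * u z') ≤ (∫ w, φ (z', w) ∂(volume.restrict D)) / Real.pi
        + Real.exp (-(2 * c' * t) * Real.log r) := by
    intro z' hsecint
    set ρ : ℝ := min r (Real.exp (u z' / t)) with hρdef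
    have hρpos : 0 < ρ := lt_min hr (Real.exp_pos _)
    have hρr : ρ ≤ r := min_le_left _ _
    have hFnonneg : 0 ≤ ∫ w, φ (z', w) ∂(volume.restrict D) :=
      integral_nonneg fun w => (Real.exp_pos _).le
    have h2 : ∫ w in ball (0 : ℂ) ρ, φ (z', w)
        = (volume (ball (0 : ℂ) ρ)).toReal * Real.exp (-2 * c * u z') := by
      have hcongr : ∀ᵐ w ∂volume, w ∈ ball (0 : ℂ) ρ →
          φ (z', w) = Real.exp (-2 * c * u z') := by
        filter_upwards [hne0] with w hw hwball
        have haw : 0 < ‖w‖ := norm_pos_iff.mpr hw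
        have h3 : ‖w‖ < ρ := by
          simpa [Complex.dist_eq] using mem_ball.1 hwball
        have hlog : Real.log (‖w‖) ≤ u z' / t := by
          calc Real.log (‖w‖) ≤ Real.log ρ := Real.log_le_log haw h3.le
            _ ≤ Real.log (Real.exp (u z' / t)) :=
                Real.log_le_log hρpos (min_le_right _ _)
            _ = u z' / t := Real.log_exp _
        have h4 : t * Real.log (‖w‖) ≤ u z' := by
          rw [← le_div_iff₀' ht]; exact hlog
        rw [hφ]
        simp only [max_eq_left h4]
      rw [setIntegral_congr_ae measurableSet_ball hcongr, setIntegral_const, smul_eq_mul]; rfl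
    have h1 : ∫ w in ball (0 : ℂ) ρ, φ (z', w) ≤ ∫ w, φ (z', w) ∂(volume.restrict D) :=
      setIntegral_mono_set hsecint (Filter.Eventually.of_forall fun w => (Real.exp_pos _).le)
        (HasSubset.Subset.eventuallyLE (ball_subset_ball hρr))
    have hvol : (volume (ball (0 : ℂ) ρ)).toReal = ρ ^ 2 * Real.pi := by
      rw [Complex.volume_ball, ENNReal.toReal_mul, ← ENNReal.ofReal_pow hρpos.le,
        ENNReal.toReal_ofReal (by positivity)]
      simp [NNReal.coe_real_pi]
    rcases le_total (Real.exp (u z' / t)) r with h | h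
    · have hρeq : ρ = Real.exp (u z' / t) := min_eq_right h
      have hkey : Real.exp (-2 * c' * u z') * Real.pi
          ≤ ∫ w, φ (z', w) ∂(volume.restrict D) := by
        have heq : Real.exp (-2 * c' * u z')
            = Real.exp (-2 * c * u z') * ρ ^ 2 := by
          rw [hρeq, ← Real.exp_one_rpow (u z' / t), ← Real.rpow_natCast _ 2,
            ← Real.rpow_mul (Real.exp_pos 1).le, Real.exp_one_rpow, ← Real.exp_add, hcc]
          ring_nf
        calc Real.exp (-2 * c' * u z') * Real.pi
            = Real.exp (-2 * c * u z') * ρ ^ 2 * Real.pi := by rw [heq]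
          _ = (volume (ball (0 : ℂ) ρ)).toReal * Real.exp (-2 * c * u z') := by
              rw [hvol]; ring
          _ = ∫ w in ball (0 : ℂ) ρ, φ (z', w) := h2.symm
          _ ≤ _ := h1
      have : Real.exp (-2 * c' * u z') ≤ (∫ w, φ (z', w) ∂(volume.restrict D)) / Real.pi :=
        (le_div_iff₀ Real.pi_pos).2 hkey
      exact le_trans this (le_add_of_nonneg_right (Real.exp_pos _).le)
    · have hlogr : t * Real.log r ≤ u z' := by
        have : Real.log r ≤ u z' / t := by
          rw [← Real.log_exp (u z' / t)]
          exact Real.log_le_log hr h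
        rw [← le_div_iff₀' ht]; exact this
      have : Real.exp (-2 * c' * u z') ≤ Real.exp (-(2 * c' * t) * Real.log r) :=
        Real.exp_le_exp.2 (by nlinarith)
      exact le_trans this (le_add_of_nonneg_left (by positivity))
  have hgint : Integrable (fun z' => (∫ w, φ (z', w) ∂(volume.restrict D)) / Real.pi
      + Real.exp (-(2 * c' * t) * Real.log r)) (volume.restrict W) :=
    (hF.div_const _).add (integrableOn_const measure_ball_lt_top.ne)
  refine ⟨W, isOpen_ball, mem_ball_self hr, Integrable.mono' hgint ?_ ?_⟩
  · exact ((hu.const_mul (-2 * c')).exp).aestronglyMeasurable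
  · filter_upwards [hsec] with z' hz'
    rw [Real.norm_eq_abs, abs_of_pos (Real.exp_pos _)]
    exact key z' hz'

end Aux

/-- For `ψ_t(z', zₙ) = max(u(z'), t·log|zₙ|)` with `0 < t ≤ 1`, the log canonical
threshold at the origin satisfies `c(ψ_t) = c(u) + 1/t`. -/
theorem lct_max_log_abs (m : ℕ) (u : (Fin m → ℂ) → ℝ) (hu : Measurable u)
    (t : ℝ) (ht : 0 < t) (ht1 : t ≤ 1) :
    lctAt (volume : Measure ((Fin m → ℂ) × ℂ)) 0
        (fun z => max (u z.1) (t * Real.log (‖z.2‖))) =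
      lctAt (volume : Measure (Fin m → ℂ)) 0 u + ENNReal.ofReal (1 / t) := by
  unfold lctAt
  set S : Set ℝ≥0∞ := {e : ℝ≥0∞ | ∃ c : ℝ, e = ENNReal.ofReal c ∧ 0 < c ∧
    ∃ V : Set ((Fin m → ℂ) × ℂ), IsOpen V ∧ 0 ∈ V ∧
      IntegrableOn (fun z => Real.exp (-2 * c *
        max (u z.1) (t * Real.log (‖z.2‖)))) V volume} with hS
  set T : Set ℝ≥0∞ := {e : ℝ≥0∞ | ∃ c : ℝ, e = ENNReal.ofReal c ∧ 0 < c ∧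
    ∃ V : Set (Fin m → ℂ), IsOpen V ∧ 0 ∈ V ∧
      IntegrableOn (fun z => Real.exp (-2 * c * u z)) V volume} with hT
  have memA1 : ∀ c : ℝ, 0 < c → c * t < 1 → ENNReal.ofReal c ∈ S := by
    intro c h1 h2
    exact ⟨c, rfl, h1, ball (0 : Fin m → ℂ) 1 ×ˢ ball (0 : ℂ) 1,
      isOpen_ball.prod isOpen_ball,
      Set.mem_prod.2 ⟨mem_ball_self one_pos, mem_ball_self one_pos⟩,
      expA1 hu ht h1 h2⟩
  have memA2 : ∀ c c' : ℝ, 0 < c → 0 < c' → c < c' + 1 / t → 1 ≤ c * t →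
      ∀ V' : Set (Fin m → ℂ), IsOpen V' → 0 ∈ V' →
      IntegrableOn (fun z' => Real.exp (-2 * c' * u z')) V' volume →
      ENNReal.ofReal c ∈ S := by
    intro c c' hc hc' hlt hct V' hV'o h0V' hV'int
    exact ⟨c, rfl, hc, (V' ∩ ball (0 : Fin m → ℂ) 1) ×ˢ ball (0 : ℂ) 1,
      (hV'o.inter isOpen_ball).prod isOpen_ball,
      Set.mem_prod.2 ⟨⟨h0V', mem_ball_self one_pos⟩, mem_ball_self one_pos⟩,
      expA2 hu ht hc hc' hlt hct hV'int⟩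
  apply le_antisymm
  · refine sSup_le ?_
    rintro e ⟨c, rfl, hc, V, hV, h0V, hint⟩
    rcases le_or_gt c (1 / t) with h | h
    · exact le_add_left (ENNReal.ofReal_le_ofReal h)
    · have hc'' : 0 < c - 1 / t := by linarith
      have hceq : c = (c - 1 / t) + 1 / t := by ring
      rw [hceq] at hint
      obtain ⟨W, hWopen, h0W, hWint⟩ := expB hu ht hc'' hV h0V hint
      have hmem : ENNReal.ofReal (c - 1 / t) ∈ T :=
        ⟨c - 1 / t, rfl, hc'', W, hWopen, h0W, hWint⟩
      calc ENNReal.ofReal c = ENNReal.ofReal ((c - 1 / t) + 1 / t) := by rw [← hceq]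
        _ = ENNReal.ofReal (c - 1 / t) + ENNReal.ofReal (1 / t) :=
            ENNReal.ofReal_add hc''.le (by positivity)
        _ ≤ sSup T + ENNReal.ofReal (1 / t) := add_le_add_left (le_sSup hmem) _
  · refine le_of_forall_lt_imp_le_of_dense ?_
    intro x hx
    obtain ⟨d, hd0, hxd, hdlt⟩ := ENNReal.lt_iff_exists_real_btwn.1 hx
    have hdpos : 0 < d := by
      rcases lt_or_ge 0 d with h | h
      · exact h
      · rw [ENNReal.ofReal_eq_zero.2 h] at hxd
        exact absurd hxd (by simp)
    refine le_trans hxd.le (le_sSup ?_)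
    rcases lt_or_ge (d * t) 1 with hdt | hdt
    · exact memA1 d hdpos hdt
    · have h1t : ENNReal.ofReal (1 / t) ≠ ⊤ := ENNReal.ofReal_ne_top
      have hd1t : 1 / t ≤ d := by
        rw [div_le_iff₀ ht]; linarith
      have hTgt : ENNReal.ofReal (d - 1 / t) < sSup T := by
        have hsplit : ENNReal.ofReal d
            = ENNReal.ofReal (d - 1 / t) + ENNReal.ofReal (1 / t) := by
          rw [← ENNReal.ofReal_add (by linarith) (by positivity)]
          ring_nf
        rw [hsplit] at hdlt
        exact (ENNReal.add_lt_add_iff_right h1t).1 hdlt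
      obtain ⟨e, heT, hlt2⟩ := lt_sSup_iff.1 hTgt
      obtain ⟨c', rfl, hc'pos, V', hV'o, h0V', hV'int⟩ := heT
      have hdc' : d < c' + 1 / t := by
        have := (ENNReal.ofReal_lt_ofReal_iff hc'pos).1 hlt2
        linarith
      exact memA2 d c' hdpos hc'pos hdc' hdt V' hV'o h0V' hV'int
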